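/- Let 𝒱 be a finite set of N distinct vectors in ℝ³ that is vertex transitive. Then for every w ∈ 𝒱, max_{v ∈ 𝒱^N̲} |⟨v⟩|₂² = max_{v ∈ 𝒯_w} |⟨v⟩|₂², where 𝒯_w := {v ∈ 𝒱^N̲ : v_N = w} is the set of tuples whose last entry is w. -/
import Mathlib


noncomputable section

abbrev E3 := EuclideanSpace ℝ (Fin 3)

def tupleAvg (N : ℕ) (v : Fin N → E3) : E3 :=
  ∑ i : Fin N, (2 * (i : ℝ) + 3 - N) • v i

theorem vertex_transitivity_reduction (N : ℕ) (hN : 0 < N) (𝒱 : Set E3)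
    (hfin : 𝒱.Finite) (hcard : 𝒱.ncard = N)
    (htrans : ∀ u ∈ 𝒱, ∀ w ∈ 𝒱, ∃ O : E3 ≃ₗᵢ[ℝ] E3, O '' 𝒱 = 𝒱 ∧ O u = w) :
    ∀ w ∈ 𝒱,
      sSup {x : ℝ | ∃ v : Fin N → E3, Function.Injective v ∧ Set.range v = 𝒱 ∧
          x = ‖tupleAvg N v‖ ^ 2} =
      sSup {x : ℝ | ∃ v : Fin N → E3, Function.Injective v ∧ Set.range v = 𝒱 ∧
          v ⟨N - 1, Nat.sub_lt hN one_pos⟩ = w ∧ x = ‖tupleAvg N v‖ ^ 2} := by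
  intro w hw
  congr 1
  ext x
  simp only [Set.mem_setOf_eq]
  constructor
  · rintro ⟨v, hinj, hrange, rfl⟩
    have hv : v ⟨N - 1, Nat.sub_lt hN one_pos⟩ ∈ 𝒱 := hrange ▸ Set.mem_range_self _
    obtain ⟨O, hO𝒱, hOv⟩ := htrans _ hv w hw
    refine ⟨fun i => O (v i), O.injective.comp hinj, ?_, hOv, ?_⟩
    · have : Set.range (fun i => O (v i)) = O '' Set.range v := by
        rw [← Set.range_comp]; rfl
      rw [this, hrange, hO𝒱]
    · have : tupleAvg N (fun i => O (v i)) = O (tupleAvg N v) := by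
        simp [tupleAvg, map_sum, map_smul]
      rw [this, O.norm_map]
  · rintro ⟨v, hinj, hrange, _, rfl⟩
    exact ⟨v, hinj, hrange, rfl⟩
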